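/- For every k exceeding the number of nodes of the finite graph G, every graded μ-calculus formula φ is globally k-stable on (G, V) and its uniform k-approximation equals its true semantics, for every valuation V. -/
import Mathlib


/-- Formulas of the graded modal μ-calculus in negation normal form, over
proposition symbols `P` and variables `X`. -/
inductive Form (P X : Type) : Type
  | prop : P → Form P X
  | nprop : P → Form P X
  | var : X → Form P X
  | and : Form P X → Form P X → Form P X
  | or : Form P X → Form P X → Form P X
  | dia : ℕ → Form P X → Form P X   -- ◇_k φ : at least k out-neighbours satisfy φ
  | box : ℕ → Form P X → Form P X   -- □_k φ : strictly fewer than k out-neighbours fail φ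
  | mu : X → Form P X → Form P X
  | nu : X → Form P X → Form P X

variable {P X N : Type} [DecidableEq X]

/-- Iteration of a set operator from a given starting set. -/
def fpIter (f : Set N → Set N) (init : Set N) : ℕ → Set N
  | 0 => init
  | i + 1 => f (fpIter f init i)

/-- True (Knaster–Tarski) semantics of μ-calculus formulas on a graph with
edge relation `E` and labeling `lab`, under valuation `V`. -/
def sem (E : N → N → Prop) (lab : N → P → Prop) : Form P X → (X → Set N) → Set N
  | .prop p, _ => {n | lab n p}
  | .nprop p, _ => {n | ¬ lab n p}
  | .var x, V => V x
  | .and φ ψ, V => sem E lab φ V ∩ sem E lab ψ V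
  | .or φ ψ, V => sem E lab φ V ∪ sem E lab ψ V
  | .dia c φ, V => {n | c ≤ ({m | E n m} ∩ sem E lab φ V).ncard}
  | .box c φ, V => {n | ({m | E n m} \ sem E lab φ V).ncard < c}
  | .mu x φ, V => ⋂₀ {S | sem E lab φ (Function.update V x S) ⊆ S}
  | .nu x φ, V => ⋃₀ {S | S ⊆ sem E lab φ (Function.update V x S)}

/-- Uniform `k`-approximation semantics: every fixpoint is iterated exactly `k`
times (least fixpoints from `∅`, greatest fixpoints from `univ`). -/
def asem (E : N → N → Prop) (lab : N → P → Prop) (k : ℕ) :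
    Form P X → (X → Set N) → Set N
  | .prop p, _ => {n | lab n p}
  | .nprop p, _ => {n | ¬ lab n p}
  | .var x, V => V x
  | .and φ ψ, V => asem E lab k φ V ∩ asem E lab k ψ V
  | .or φ ψ, V => asem E lab k φ V ∪ asem E lab k ψ V
  | .dia c φ, V => {n | c ≤ ({m | E n m} ∩ asem E lab k φ V).ncard}
  | .box c φ, V => {n | ({m | E n m} \ asem E lab k φ V).ncard < c}
  | .mu x φ, V => fpIter (fun S => asem E lab k φ (Function.update V x S)) ∅ k
  | .nu x φ, V => fpIter (fun S => asem E lab k φ (Function.update V x S)) Set.univ k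

/-- Free variables of a formula. -/
def freeVars : Form P X → Set X
  | .prop _ => ∅
  | .nprop _ => ∅
  | .var x => {x}
  | .and φ ψ => freeVars φ ∪ freeVars ψ
  | .or φ ψ => freeVars φ ∪ freeVars ψ
  | .dia _ φ => freeVars φ
  | .box _ φ => freeVars φ
  | .mu x φ => freeVars φ \ {x}
  | .nu x φ => freeVars φ \ {x}

/-- Pointwise `k`-stability of a formula on `(G, V, n)`. -/
def stableAt (E : N → N → Prop) (lab : N → P → Prop) (k : ℕ) :
    Form P X → (X → Set N) → N → Prop
  | .prop _, _, _ => True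
  | .nprop _, _, _ => True
  | .var _, _, _ => True
  | .and φ ψ, V, n => stableAt E lab k φ V n ∧ stableAt E lab k ψ V n
  | .or φ ψ, V, n => stableAt E lab k φ V n ∧ stableAt E lab k ψ V n
  | .dia _ φ, V, n => stableAt E lab k φ V n
  | .box _ φ, V, n => stableAt E lab k φ V n
  | .mu x ψ, V, n =>
      ((n ∈ fpIter (fun S => asem E lab k ψ (Function.update V x S)) ∅ k) ↔
        (n ∈ fpIter (fun S => asem E lab k ψ (Function.update V x S)) ∅ (k - 1))) ∧
      ∀ i < k, stableAt E lab k ψ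
        (Function.update V x
          (fpIter (fun S => asem E lab k ψ (Function.update V x S)) ∅ i)) n
  | .nu x ψ, V, n =>
      ((n ∈ fpIter (fun S => asem E lab k ψ (Function.update V x S)) Set.univ k) ↔
        (n ∈ fpIter (fun S => asem E lab k ψ (Function.update V x S)) Set.univ (k - 1))) ∧
      ∀ i < k, stableAt E lab k ψ
        (Function.update V x
          (fpIter (fun S => asem E lab k ψ (Function.update V x S)) Set.univ i)) n

/-- Global `k`-stability of a formula on `(G, V)`. -/
def gStable (E : N → N → Prop) (lab : N → P → Prop) (k : ℕ) :
    Form P X → (X → Set N) → Prop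
  | .prop _, _ => True
  | .nprop _, _ => True
  | .var _, _ => True
  | .and φ ψ, V => gStable E lab k φ V ∧ gStable E lab k ψ V
  | .or φ ψ, V => gStable E lab k φ V ∧ gStable E lab k ψ V
  | .dia _ φ, V => gStable E lab k φ V
  | .box _ φ, V => gStable E lab k φ V
  | .mu x ψ, V =>
      fpIter (fun S => asem E lab k ψ (Function.update V x S)) ∅ k =
        fpIter (fun S => asem E lab k ψ (Function.update V x S)) ∅ (k - 1) ∧
      ∀ i < k, gStable E lab k ψ
        (Function.update V x
          (fpIter (fun S => asem E lab k ψ (Function.update V x S)) ∅ i))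
  | .nu x ψ, V =>
      fpIter (fun S => asem E lab k ψ (Function.update V x S)) Set.univ k =
        fpIter (fun S => asem E lab k ψ (Function.update V x S)) Set.univ (k - 1) ∧
      ∀ i < k, gStable E lab k ψ
        (Function.update V x
          (fpIter (fun S => asem E lab k ψ (Function.update V x S)) Set.univ i))

/-- `(j,k)`-stability of a fixpoint formula on `(G, V, n)` (trivially true on
non-fixpoint formulas). -/
def jkStable (E : N → N → Prop) (lab : N → P → Prop) (j k : ℕ) :
    Form P X → (X → Set N) → N → Prop
  | .mu x ψ, V, n =>
      ∀ i < j, stableAt E lab k ψ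
        (Function.update V x
          (fpIter (fun S => asem E lab k ψ (Function.update V x S)) ∅ i)) n
  | .nu x ψ, V, n =>
      ∀ i < j, stableAt E lab k ψ
        (Function.update V x
          (fpIter (fun S => asem E lab k ψ (Function.update V x S)) Set.univ i)) n
  | _, _, _ => True

section Aux

lemma update_mono2 {V W : X → Set N} {x : X} {S T : Set N}
    (h : ∀ y, V y ⊆ W y) (hST : S ⊆ T) :
    ∀ y, Function.update V x S y ⊆ Function.update W x T y := by
  intro y
  rcases eq_or_ne y x with rfl | hy
  · simpa using hST
  · simpa [Function.update_of_ne hy] using h y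

variable [Fintype N]

lemma ncard_inter_mono {A S T : Set N} (h : S ⊆ T) : (A ∩ S).ncard ≤ (A ∩ T).ncard :=
  Set.ncard_le_ncard (Set.inter_subset_inter_right _ h) (Set.toFinite _)

lemma ncard_diff_anti {A S T : Set N} (h : S ⊆ T) : (A \ T).ncard ≤ (A \ S).ncard :=
  Set.ncard_le_ncard (fun m hm => ⟨hm.1, fun hs => hm.2 (h hs)⟩) (Set.toFinite _)

lemma sem_mono (E : N → N → Prop) (lab : N → P → Prop) :
    ∀ (φ : Form P X) (V W : X → Set N), (∀ y, V y ⊆ W y) →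
      sem E lab φ V ⊆ sem E lab φ W := by
  intro φ
  induction φ with
  | prop p => intro V W h; exact subset_rfl
  | nprop p => intro V W h; exact subset_rfl
  | var x => intro V W h; exact h x
  | and φ ψ ih1 ih2 => intro V W h
                       exact Set.inter_subset_inter (ih1 V W h) (ih2 V W h)
  | or φ ψ ih1 ih2 => intro V W h
                      exact Set.union_subset_union (ih1 V W h) (ih2 V W h)
  | dia c φ ih => intro V W h n hn; exact le_trans hn (ncard_inter_mono (ih V W h))
  | box c φ ih => intro V W h n hn; exact lt_of_le_of_lt (ncard_diff_anti (ih V W h)) hn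
  | mu x ψ ih =>
      intro V W h
      apply Set.sInter_subset_sInter
      intro S hS
      exact (ih _ _ (update_mono2 h subset_rfl)).trans hS
  | nu x ψ ih =>
      intro V W h
      apply Set.sUnion_subset_sUnion
      intro S hS
      exact hS.trans (ih _ _ (update_mono2 h subset_rfl))

lemma asem_mono (E : N → N → Prop) (lab : N → P → Prop) (k : ℕ) :
    ∀ (φ : Form P X) (V W : X → Set N), (∀ y, V y ⊆ W y) →
      asem E lab k φ V ⊆ asem E lab k φ W := by
  intro φ
  induction φ with
  | prop p => intro V W h; exact subset_rfl
  | nprop p => intro V W h; exact subset_rfl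
  | var x => intro V W h; exact h x
  | and φ ψ ih1 ih2 => intro V W h
                       exact Set.inter_subset_inter (ih1 V W h) (ih2 V W h)
  | or φ ψ ih1 ih2 => intro V W h
                      exact Set.union_subset_union (ih1 V W h) (ih2 V W h)
  | dia c φ ih => intro V W h n hn; exact le_trans hn (ncard_inter_mono (ih V W h))
  | box c φ ih => intro V W h n hn; exact lt_of_le_of_lt (ncard_diff_anti (ih V W h)) hn
  | mu x ψ ih =>
      intro V W h
      show fpIter _ ∅ k ⊆ fpIter _ ∅ k
      have : ∀ i, fpIter (fun S => asem E lab k ψ (Function.update V x S)) ∅ i ⊆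
          fpIter (fun S => asem E lab k ψ (Function.update W x S)) ∅ i := by
        intro i
        induction i with
        | zero => exact subset_rfl
        | succ i hi => exact ih _ _ (update_mono2 h hi)
      exact this k
  | nu x ψ ih =>
      intro V W h
      show fpIter _ Set.univ k ⊆ fpIter _ Set.univ k
      have : ∀ i, fpIter (fun S => asem E lab k ψ (Function.update V x S)) Set.univ i ⊆
          fpIter (fun S => asem E lab k ψ (Function.update W x S)) Set.univ i := by
        intro i
        induction i with
        | zero => exact subset_rfl
        | succ i hi => exact ih _ _ (update_mono2 h hi)
      exact this k

lemma fpIter_eq_of_eq {f : Set N → Set N} {init : Set N} {i : ℕ}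
    (h : fpIter f init (i + 1) = fpIter f init i) :
    ∀ j, i ≤ j → fpIter f init j = fpIter f init i := by
  intro j hj
  induction j with
  | zero => have h0 : i = 0 := by omega
            rw [h0]
  | succ j ihj =>
      rcases Nat.lt_or_ge i (j + 1) with hlt | hge
      · have hij : i ≤ j := by omega
        calc fpIter f init (j + 1) = f (fpIter f init j) := rfl
          _ = f (fpIter f init i) := by rw [ihj hij]
          _ = fpIter f init (i + 1) := rfl
          _ = fpIter f init i := h
      · have : i = j + 1 := by omega
        rw [this]

lemma mu_chain_mono {f : Set N → Set N} (hf : Monotone f) :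
    ∀ i, fpIter f ∅ i ⊆ fpIter f ∅ (i + 1)
  | 0 => Set.empty_subset _
  | i + 1 => hf (mu_chain_mono hf i)

lemma nu_chain_anti {f : Set N → Set N} (hf : Monotone f) :
    ∀ i, fpIter f Set.univ (i + 1) ⊆ fpIter f Set.univ i
  | 0 => Set.subset_univ _
  | i + 1 => hf (nu_chain_anti hf i)

lemma ncard_le_cardN (S : Set N) : S.ncard ≤ Fintype.card N := by
  have h := Set.ncard_le_ncard (Set.subset_univ S) (Set.toFinite _)
  rwa [Set.ncard_univ, Nat.card_eq_fintype_card] at h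

lemma mu_fix {f : Set N → Set N} (hf : Monotone f) :
    ∃ i ≤ Fintype.card N, fpIter f ∅ (i + 1) = fpIter f ∅ i := by
  by_contra h
  push_neg at h
  have key : ∀ n, n ≤ Fintype.card N + 1 → n ≤ (fpIter f ∅ n).ncard := by
    intro n
    induction n with
    | zero => intro _; exact Nat.zero_le _
    | succ m ihm =>
        intro hm
        have h1 := ihm (by omega)
        have hss : fpIter f ∅ m ⊂ fpIter f ∅ (m + 1) :=
          (mu_chain_mono hf m).ssubset_of_ne (fun he => h m (by omega) he.symm)
        have := Set.ncard_lt_ncard hss (Set.toFinite _)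
        omega
  have h1 := key (Fintype.card N + 1) le_rfl
  have h2 := ncard_le_cardN (fpIter f ∅ (Fintype.card N + 1))
  omega

lemma nu_fix {f : Set N → Set N} (hf : Monotone f) :
    ∃ i ≤ Fintype.card N, fpIter f Set.univ (i + 1) = fpIter f Set.univ i := by
  by_contra h
  push_neg at h
  have key : ∀ n, n ≤ Fintype.card N + 1 →
      (fpIter f Set.univ n).ncard + n ≤ Fintype.card N := by
    intro n
    induction n with
    | zero => intro _; simpa using ncard_le_cardN (fpIter f Set.univ 0)
    | succ m ihm =>
        intro hm
        have h1 := ihm (by omega)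
        have hss : fpIter f Set.univ (m + 1) ⊂ fpIter f Set.univ m :=
          HasSubset.Subset.ssubset_of_ne (nu_chain_anti hf m) (h m (by omega))
        have := Set.ncard_lt_ncard hss (Set.toFinite _)
        omega
  have h1 := key (Fintype.card N + 1) le_rfl
  omega

lemma mu_main {f : Set N → Set N} (hf : Monotone f) {k : ℕ}
    (hk : Fintype.card N < k) :
    fpIter f ∅ k = ⋂₀ {S | f S ⊆ S} ∧ fpIter f ∅ k = fpIter f ∅ (k - 1) := by
  obtain ⟨i, hi, hfix⟩ := mu_fix hf
  have hki : i ≤ k := by omega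
  have hki1 : i ≤ k - 1 := by omega
  have h1 := fpIter_eq_of_eq hfix k hki
  have h2 := fpIter_eq_of_eq hfix (k - 1) hki1
  refine ⟨?_, by rw [h1, h2]⟩
  have hfixed : f (fpIter f ∅ i) = fpIter f ∅ i := hfix
  have hle : ∀ S, f S ⊆ S → ∀ n, fpIter f ∅ n ⊆ S := by
    intro S hS n
    induction n with
    | zero => exact Set.empty_subset _
    | succ n ihn => exact (hf ihn).trans hS
  rw [h1]
  apply Set.Subset.antisymm
  · exact Set.subset_sInter (fun S hS => hle S hS i)
  · exact Set.sInter_subset_of_mem (le_of_eq hfixed)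

lemma nu_main {f : Set N → Set N} (hf : Monotone f) {k : ℕ}
    (hk : Fintype.card N < k) :
    fpIter f Set.univ k = ⋃₀ {S | S ⊆ f S} ∧
      fpIter f Set.univ k = fpIter f Set.univ (k - 1) := by
  obtain ⟨i, hi, hfix⟩ := nu_fix hf
  have hki : i ≤ k := by omega
  have hki1 : i ≤ k - 1 := by omega
  have h1 := fpIter_eq_of_eq hfix k hki
  have h2 := fpIter_eq_of_eq hfix (k - 1) hki1
  refine ⟨?_, by rw [h1, h2]⟩
  have hfixed : f (fpIter f Set.univ i) = fpIter f Set.univ i := hfix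
  have hle : ∀ S, S ⊆ f S → ∀ n, S ⊆ fpIter f Set.univ n := by
    intro S hS n
    induction n with
    | zero => exact Set.subset_univ _
    | succ n ihn => exact hS.trans (hf ihn)
  rw [h1]
  apply Set.Subset.antisymm
  · exact Set.subset_sUnion_of_mem (ge_of_eq hfixed)
  · exact Set.sUnion_subset (fun S hS => hle S hS i)

end Aux

/-- For `k` larger than the number of nodes, every formula is globally `k`-stable
and its uniform `k`-approximation equals its true semantics, for every valuation. -/
theorem gStable_of_card_lt [Fintype N] (E : N → N → Prop) (lab : N → P → Prop)
    (k : ℕ) (hk : Fintype.card N < k) (φ : Form P X) :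
    ∀ V : X → Set N, gStable E lab k φ V ∧ asem E lab k φ V = sem E lab φ V := by
  induction φ with
  | prop p => intro V; exact ⟨trivial, rfl⟩
  | nprop p => intro V; exact ⟨trivial, rfl⟩
  | var x => intro V; exact ⟨trivial, rfl⟩
  | and φ ψ ih1 ih2 =>
      intro V
      refine ⟨⟨(ih1 V).1, (ih2 V).1⟩, ?_⟩
      show asem E lab k φ V ∩ asem E lab k ψ V = _
      rw [(ih1 V).2, (ih2 V).2]; rfl
  | or φ ψ ih1 ih2 =>
      intro V
      refine ⟨⟨(ih1 V).1, (ih2 V).1⟩, ?_⟩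
      show asem E lab k φ V ∪ asem E lab k ψ V = _
      rw [(ih1 V).2, (ih2 V).2]; rfl
  | dia c φ ih =>
      intro V
      refine ⟨(ih V).1, ?_⟩
      show {n | c ≤ ({m | E n m} ∩ asem E lab k φ V).ncard} = _
      rw [(ih V).2]; rfl
  | box c φ ih =>
      intro V
      refine ⟨(ih V).1, ?_⟩
      show {n | ({m | E n m} \ asem E lab k φ V).ncard < c} = _
      rw [(ih V).2]; rfl
  | mu x ψ ih =>
      intro V
      set f := fun S => asem E lab k ψ (Function.update V x S) with hf
      have hmono : Monotone f := fun S T h =>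
        asem_mono E lab k ψ _ _ (update_mono2 (fun _ => subset_rfl) h)
      obtain ⟨heq, hiter⟩ := mu_main hmono hk
      constructor
      · exact ⟨hiter.symm ▸ hiter, fun i _ => (ih _).1⟩
      · show fpIter f ∅ k = _
        rw [heq]
        show _ = ⋂₀ {S | sem E lab ψ (Function.update V x S) ⊆ S}
        have : {S | f S ⊆ S} = {S | sem E lab ψ (Function.update V x S) ⊆ S} := by
          ext S
          show asem E lab k ψ (Function.update V x S) ⊆ S ↔ _
          rw [(ih (Function.update V x S)).2]
          exact Iff.rfl
        rw [this]
  | nu x ψ ih =>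
      intro V
      set f := fun S => asem E lab k ψ (Function.update V x S) with hf
      have hmono : Monotone f := fun S T h =>
        asem_mono E lab k ψ _ _ (update_mono2 (fun _ => subset_rfl) h)
      obtain ⟨heq, hiter⟩ := nu_main hmono hk
      constructor
      · exact ⟨hiter, fun i _ => (ih _).1⟩
      · show fpIter f Set.univ k = _
        rw [heq]
        show _ = ⋃₀ {S | S ⊆ sem E lab ψ (Function.update V x S)}
        have : {S | S ⊆ f S} = {S | S ⊆ sem E lab ψ (Function.update V x S)} := by
          ext S
          show S ⊆ asem E lab k ψ (Function.update V x S) ↔ _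
          rw [(ih (Function.update V x S)).2]
          exact Iff.rfl
        rw [this]
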